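/- Let A be a unital commutative C*-algebra with maximal ideal space M, δ : A → A an endomorphism with dual map α : Δ → M. Then δ is a partial automorphism (i.e., ker δ is unital and δ(A) is an ideal in A) if and only if α(Δ) is clopen in M and α : Δ → α(Δ) is a homeomorphism. -/

import Mathlib

open Classical

lemma clopen_dite_continuous {X Y : Type*} [TopologicalSpace X] [TopologicalSpace Y]
    {S : Set X} (hS : IsClopen S) (f : S → Y) (hf : Continuous f) (y0 : Y) :
    Continuous (fun x => if h : x ∈ S then f ⟨x, h⟩ else y0) := by
  set g : X → Y := fun x => if h : x ∈ S then f ⟨x, h⟩ else y0 with hg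
  have h1 : ContinuousOn g S := by
    rw [continuousOn_iff_continuous_restrict]
    have : S.domRestrict g = f := by
      funext z
      simp only [Set.domRestrict_apply, hg, dif_pos z.2]
    rw [this]; exact hf
  have h2 : ContinuousOn g Sᶜ := by
    rw [continuousOn_iff_continuous_restrict]
    have : Sᶜ.domRestrict g = fun _ => y0 := by
      funext z
      simp only [Set.domRestrict_apply, hg, dif_neg z.2]
    rw [this]; exact continuous_const
  rw [continuous_iff_continuousAt]
  intro x
  by_cases hx : x ∈ S
  · exact h1.continuousAt (hS.isOpen.mem_nhds hx)
  · exact h2.continuousAt (hS.compl.isOpen.mem_nhds hx)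

/-- `δ` (given by clopen `Δ` and continuous `α : Δ → M`) is a partial automorphism
(unital kernel and image an ideal) iff `α(Δ)` is clopen and `α : Δ → α(Δ)` is a homeomorphism. -/
theorem stmt1 {M : Type*} [TopologicalSpace M] [CompactSpace M] [T2Space M]
    (Δ : Set M) (hΔ : IsClopen Δ) (α : C(Δ, M))
    (δ : C(M, ℂ) → C(M, ℂ))
    (hδ : ∀ (a : C(M, ℂ)) (x : M), δ a x = if h : x ∈ Δ then a (α ⟨x, h⟩) else 0) :
    ((∃ e : C(M, ℂ), δ e = 0 ∧ ∀ a : C(M, ℂ), δ a = 0 → e * a = a) ∧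
      (∀ a b : C(M, ℂ), ∃ c : C(M, ℂ), b * δ a = δ c)) ↔
    (IsClopen (Set.range (fun x : Δ => α x)) ∧
      ∃ h : Δ ≃ₜ (Set.range (fun x : Δ => α x)), ∀ x : Δ, (h x : M) = α x) := by
  set S : Set M := Set.range (fun x : Δ => α x) with hSdef
  have hΔcompact : CompactSpace Δ := isCompact_iff_compactSpace.mp hΔ.isClosed.isCompact
  have hScompact : IsCompact S := isCompact_range α.continuous
  have hSclosed : IsClosed S := hScompact.isClosed
  constructor
  · rintro ⟨⟨e, he0, heu⟩, hB⟩
    -- e vanishes on S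
    have heS : ∀ z ∈ S, e z = 0 := by
      rintro z ⟨x, rfl⟩
      have := ContinuousMap.congr_fun he0 (x : M)
      rw [hδ] at this
      rw [dif_pos x.2] at this
      simpa using this
    -- e is 1 off S
    have heSc : ∀ z ∉ S, e z = 1 := by
      intro z hz
      obtain ⟨f, hf0, hf1, -⟩ := exists_continuous_zero_one_of_isClosed hSclosed
        (isClosed_singleton (x := z)) (Set.disjoint_singleton_right.mpr hz)
      set a : C(M, ℂ) := ⟨fun y => (f y : ℂ), Complex.continuous_ofReal.comp f.continuous⟩
        with ha
      have hδa : δ a = 0 := by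
        ext x
        rw [hδ]
        split_ifs with hx
        · have : α ⟨x, hx⟩ ∈ S := ⟨⟨x, hx⟩, rfl⟩
          simp [ha, hf0 this]
        · rfl
      have := ContinuousMap.congr_fun (heu a hδa) z
      have haz : a z = 1 := by
        simp [ha, hf1 (Set.mem_singleton z)]
      rw [ContinuousMap.mul_apply, haz, mul_one] at this
      exact this
    -- S is clopen
    have hSopen : IsOpen S := by
      have : Sᶜ = e ⁻¹' {1} := by
        ext z
        constructor
        · intro hz; exact heSc z hz
        · intro hz hzS
          have h0 := heS z hzS
          simp only [Set.mem_preimage, Set.mem_singleton_iff] at hz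
          rw [h0] at hz
          exact zero_ne_one hz
      have : IsClosed Sᶜ := this ▸ (isClosed_singleton.preimage e.continuous)
      simpa using this.isOpen_compl
    have hSclopen : IsClopen S := ⟨hSclosed, hSopen⟩
    refine ⟨hSclopen, ?_⟩
    -- injectivity
    have hinj : Function.Injective (fun x : Δ => α x) := by
      intro x₁ x₂ hx
      by_contra hne
      have hne' : (x₁ : M) ≠ (x₂ : M) := fun h => hne (Subtype.ext h)
      obtain ⟨f, hf0, hf1, -⟩ := exists_continuous_zero_one_of_isClosed
        (isClosed_singleton (x := (x₁ : M))) (isClosed_singleton (x := (x₂ : M)))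
        (Set.disjoint_singleton.mpr hne')
      set b : C(M, ℂ) := ⟨fun y => (f y : ℂ), Complex.continuous_ofReal.comp f.continuous⟩
        with hb
      obtain ⟨c, hc⟩ := hB 1 b
      have e1 := ContinuousMap.congr_fun hc (x₁ : M)
      have e2 := ContinuousMap.congr_fun hc (x₂ : M)
      rw [ContinuousMap.mul_apply, hδ, hδ, dif_pos x₁.2, dif_pos x₁.2] at e1
      rw [ContinuousMap.mul_apply, hδ, hδ, dif_pos x₂.2, dif_pos x₂.2] at e2
      have hb1 : b (x₁ : M) = 0 := by simp [hb, hf0 (Set.mem_singleton _)]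
      have hb2 : b (x₂ : M) = 1 := by simp [hb, hf1 (Set.mem_singleton _)]
      have hx' : α ⟨(x₁ : M), x₁.2⟩ = α ⟨(x₂ : M), x₂.2⟩ := by
        simpa using hx
      rw [hb1, ContinuousMap.one_apply, zero_mul] at e1
      rw [hb2, ContinuousMap.one_apply, one_mul] at e2
      rw [hx', ← e2] at e1
      exact zero_ne_one e1
    set eqv : Δ ≃ S := Equiv.ofInjective (fun x : Δ => α x) hinj with heqv
    have hcont : Continuous eqv := by
      rw [continuous_induced_rng]
      have : Subtype.val ∘ eqv = fun x : Δ => α x := by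
        funext x; rfl
      rw [this]
      exact α.continuous
    refine ⟨hcont.homeoOfEquivCompactToT2, fun x => ?_⟩
    show ((eqv x : S) : M) = α x
    rfl
  · rintro ⟨hSclopen, h, hh⟩
    have hmem : ∀ x : Δ, α x ∈ S := fun x => ⟨x, rfl⟩
    have hsymm : ∀ x : Δ, h.symm ⟨α x, hmem x⟩ = x := by
      intro x
      have : h x = ⟨α x, hmem x⟩ := Subtype.ext (hh x)
      rw [← this, Homeomorph.symm_apply_apply]
    constructor
    · -- unital kernel
      refine ⟨⟨fun y => if hy : y ∈ S then 0 else 1,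
        clopen_dite_continuous hSclopen (fun _ => (0 : ℂ)) continuous_const 1⟩, ?_, ?_⟩
      · ext x
        rw [hδ]
        split_ifs with hx
        · show (if hy : α ⟨x, hx⟩ ∈ S then (0:ℂ) else 1) = _
          rw [dif_pos (hmem ⟨x, hx⟩)]
          rfl
        · rfl
      · intro a ha
        have haS : ∀ z ∈ S, a z = 0 := by
          rintro z ⟨x, rfl⟩
          have := ContinuousMap.congr_fun ha (x : M)
          rw [hδ, dif_pos x.2] at this
          simpa using this
        ext y
        rw [ContinuousMap.mul_apply]
        show (if hy : y ∈ S then (0:ℂ) else 1) * a y = a y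
        split_ifs with hy
        · rw [haS y hy, mul_zero]
        · rw [one_mul]
    · -- image is an ideal
      intro a b
      refine ⟨⟨fun y => if hy : y ∈ S then b ((h.symm ⟨y, hy⟩ : Δ) : M) * a y else 0,
        clopen_dite_continuous hSclopen
          (fun z => b ((h.symm z : Δ) : M) * a (z : M))
          ((b.continuous.comp (continuous_subtype_val.comp h.symm.continuous)).mul
            (a.continuous.comp continuous_subtype_val)) 0⟩, ?_⟩
      ext x
      rw [ContinuousMap.mul_apply, hδ, hδ]
      split_ifs with hx
      · show b x * a (α ⟨x, hx⟩) =
          if hy : α ⟨x, hx⟩ ∈ S then b ((h.symm ⟨α ⟨x, hx⟩, hy⟩ : Δ) : M) * a (α ⟨x, hx⟩) else 0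
        rw [dif_pos (hmem ⟨x, hx⟩), hsymm ⟨x, hx⟩]
      · rw [mul_zero]
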